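/- arXiv:2207.05237 — 2 statements merged into one kernel-verified Lean document; each statement's English description precedes it below -/
import Mathlib

section
/- For every J ∈ 𝒫 one has 0 ≤ t_J(i) ≤ p − 1 for all i ∈ ℤ/f'ℤ, and the values t_J(i) are not all equal to p − 1; moreover, the map J ↦ t_J is injective on 𝒫. (This is the combinatorial content of the fact that the Galois characters T(N(J)) attached to the irreducible components labelled by J ∈ 𝒫_τ are pairwise distinct.) -/
/-- The combinatorial content of the fact that the Galois characters `T(N(J))` attached to the
irreducible components labelled by `J ∈ 𝒫_τ` are pairwise distinct: for a non-scalar tame type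
with exponents `γ`, the tuples `t_J` for `J ∈ 𝒫` take values in `[0, p-1]`, are never identically
`p - 1`, and the assignment `J ↦ t_J` is injective on `𝒫`. -/
theorem tJ_injective_on_P (p f' : ℕ) (hp : p.Prime) (hf' : 0 < f')
    (γ : ZMod f' → ℤ)
    (hγ0 : ∀ i, 0 ≤ γ i) (hγp : ∀ i, γ i ≤ (p : ℤ) - 1)
    (hnotallp : ¬ ∀ i, γ i = (p : ℤ) - 1) (hnotall0 : ¬ ∀ i, γ i = 0) :
    let P : Set (Finset (ZMod f')) := { J | ∀ i : ZMod f',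
      (i - 1 ∈ J → i ∉ J → γ i ≠ (p : ℤ) - 1) ∧ (i - 1 ∉ J → i ∈ J → γ i ≠ 0) }
    let t : Finset (ZMod f') → ZMod f' → ℤ := fun J i =>
      if i - 1 ∈ J then (if i ∈ J then γ i else γ i + 1) else 0
    (∀ J ∈ P, ∀ i, 0 ≤ t J i ∧ t J i ≤ (p : ℤ) - 1) ∧
    (∀ J ∈ P, ¬ ∀ i, t J i = (p : ℤ) - 1) ∧
    Set.InjOn t P := by
  haveI : NeZero f' := ⟨hf'.ne'⟩
  intro P t
  have hp2 : (2 : ℤ) ≤ p := by exact_mod_cast hp.two_le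
  -- key propagation lemma
  have key : ∀ (J K : Finset (ZMod f')), J ∈ P → K ∈ P → t J = t K →
      ∀ j, j ∈ J → j ∉ K → ∀ n : ℕ, j + (n : ZMod f') ∈ J ∧ j + (n : ZMod f') ∉ K := by
    intro J K hJ hK hEq j hjJ hjK n
    induction n with
    | zero => simpa using ⟨hjJ, hjK⟩
    | succ n ih =>
      obtain ⟨hJn, hKn⟩ := ih
      set i : ZMod f' := j + ((n + 1 : ℕ) : ZMod f') with hi
      have hi1 : i - 1 = j + (n : ZMod f') := by rw [hi]; push_cast; ring
      have h := congrFun hEq i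
      simp only [t] at h
      rw [hi1, if_pos hJn, if_neg hKn] at h
      by_cases hiJ : i ∈ J
      · rw [if_pos hiJ] at h
        have hiK : i ∉ K := fun hiK => (hK i).2 (by rw [hi1]; exact hKn) hiK h
        exact ⟨hiJ, hiK⟩
      · rw [if_neg hiJ] at h
        exact absurd h (by have := hγ0 i; omega)
  have hval : ∀ i j : ZMod f', j + (((i - j).val : ℕ) : ZMod f') = i := by
    intro i j
    rw [ZMod.natCast_val, ZMod.cast_id]
    ring
  refine ⟨?_, ?_, ?_⟩
  · intro J hJ i
    by_cases h1 : i - 1 ∈ J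
    · by_cases h2 : i ∈ J
      · simp only [t, if_pos h1, if_pos h2]
        exact ⟨hγ0 i, hγp i⟩
      · have hne := (hJ i).1 h1 h2
        simp only [t, if_pos h1, if_neg h2]
        have := hγp i
        have := hγ0 i
        omega
    · simp only [t, if_neg h1]
      constructor
      · exact le_refl 0
      · omega
  · intro J hJ hall
    have hall' : ∀ i : ZMod f', i ∈ J := by
      intro i
      by_contra hi
      have h := hall (i + 1)
      simp only [t] at h
      rw [show (i + 1 - 1 : ZMod f') = i by ring, if_neg hi] at h
      omega
    apply hnotallp
    intro i
    have h := hall i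
    simp only [t, if_pos (hall' (i - 1)), if_pos (hall' i)] at h
    exact h
  · intro J hJ K hK hEq
    by_contra hne
    rw [Finset.ext_iff] at hne
    push_neg at hne
    obtain ⟨j, hj⟩ := hne
    rcases hj with ⟨hjJ, hjK⟩ | ⟨hjJ, hjK⟩
    · have hAll : ∀ i : ZMod f', i ∈ J ∧ i ∉ K := by
        intro i
        have := key J K hJ hK hEq j hjJ hjK ((i - j).val)
        rwa [hval i j] at this
      apply hnotall0
      intro i
      have h := congrFun hEq i
      simp only [t, if_pos (hAll (i - 1)).1, if_pos (hAll i).1, if_neg (hAll (i - 1)).2] at h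
      exact h
    · have hAll : ∀ i : ZMod f', i ∈ K ∧ i ∉ J := by
        intro i
        have := key K J hK hJ hEq.symm j hjK hjJ ((i - j).val)
        rwa [hval i j] at this
      apply hnotall0
      intro i
      have h := congrFun hEq i
      simp only [t, if_pos (hAll (i - 1)).1, if_pos (hAll i).1, if_neg (hAll (i - 1)).2] at h
      exact h.symm
end

section
/- The fixed subring { x ∈ R : φ(x) = x } is exactly the image of Λ under the natural map Λ → R. (This is the key computation showing that the endomorphism ring of a rank one étale φ-module with Λ-coefficients and descent data is Λ.) -/
noncomputable section

open scoped TensorProduct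

variable (p : ℕ) [Fact p.Prime]

/-- The canonical `𝔽_p = ZMod p` algebra structure on a field of characteristic `p`. -/
noncomputable instance charPAlgebra (k' : Type*) [CommRing k'] [CharP k' p] :
    Algebra (ZMod p) k' :=
  (ZMod.castHom dvd_rfl k').toAlgebra

/-- The Frobenius `x ↦ x^p` of `k'` as a `ZMod p`-linear map. -/
def frobLin (k' : Type*) [Field k'] [CharP k' p] : k' →ₗ[ZMod p] k' where
  toFun x := x ^ p
  map_add' x y := add_pow_char x y p
  map_smul' t x := by
    simp only [RingHom.id_apply]
    rw [Algebra.smul_def, Algebra.smul_def, mul_pow, ← map_pow, ZMod.pow_card]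

/-- The map `frobenius ⊗ id` on `k' ⊗_{𝔽_p} Λ`. -/
def frobTensor (k' : Type*) [Field k'] [CharP k' p] (Λ : Type*) [CommRing Λ]
    [Algebra (ZMod p) Λ] :
    (k' ⊗[ZMod p] Λ) →ₗ[ZMod p] (k' ⊗[ZMod p] Λ) :=
  TensorProduct.map (frobLin p k') LinearMap.id

/-- The semilinear substitution `Σ a_n u^n ↦ Σ (frobenius ⊗ id)(a_n) u^{pn}` on
`(k' ⊗_{𝔽_p} Λ)[[u]]`: this is the restriction to `(k' ⊗ Λ)[[u]]` of the ring endomorphism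
`φ` of `((k' ⊗ Λ)[[u]])[1/u]` which acts as the Frobenius `x ↦ x^p` on `k'`, as the identity
on `Λ`, and sends `u` to `u^p`. -/
def phiPS (k' : Type*) [Field k'] [CharP k' p] (Λ : Type*) [CommRing Λ] [Algebra (ZMod p) Λ]
    (f : PowerSeries (k' ⊗[ZMod p] Λ)) : PowerSeries (k' ⊗[ZMod p] Λ) :=
  PowerSeries.mk fun n =>
    if p ∣ n then frobTensor p k' Λ ((PowerSeries.coeff (n / p)) f) else 0

-- Aux lemmas
lemma frobTensor_tmul (k' : Type*) [Field k'] [CharP k' p] (Λ : Type*) [CommRing Λ]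
    [Algebra (ZMod p) Λ] (x : k') (l : Λ) :
    frobTensor p k' Λ (x ⊗ₜ[ZMod p] l) = (x ^ p) ⊗ₜ[ZMod p] l := by
  simp [frobTensor, frobLin]

lemma fixed_k' (k' : Type*) [Field k'] [Fintype k'] [CharP k' p] (x : k')
    (hx : x ^ p = x) : ∃ t : ZMod p, algebraMap (ZMod p) k' t = x := by
  classical
  have hp : 1 < p := (Fact.out : p.Prime).one_lt
  set q : Polynomial k' := Polynomial.X ^ p - Polynomial.X with hqdef
  have hq0 : q ≠ 0 := FiniteField.X_pow_card_sub_X_ne_zero k' hp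
  have hinj : Function.Injective (algebraMap (ZMod p) k') := RingHom.injective _
  set T : Finset k' := Finset.univ.image (algebraMap (ZMod p) k') with hTdef
  have hTcard : T.card = p := by
    rw [hTdef, Finset.card_image_of_injective _ hinj, Finset.card_univ, ZMod.card]
  have hTsub : T ⊆ q.roots.toFinset := by
    intro y hy
    rw [hTdef, Finset.mem_image] at hy
    obtain ⟨t, -, rfl⟩ := hy
    rw [Multiset.mem_toFinset, Polynomial.mem_roots hq0]
    simp [hqdef, Polynomial.IsRoot, ← map_pow, ZMod.pow_card]
  have hcard : q.roots.toFinset.card ≤ p := by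
    refine le_trans (Multiset.toFinset_card_le _) (le_trans q.card_roots' ?_)
    rw [FiniteField.X_pow_card_sub_X_natDegree_eq k' hp]
  have hEq : T = q.roots.toFinset := Finset.eq_of_subset_of_card_le hTsub (hTcard ▸ hcard)
  have hx' : x ∈ q.roots.toFinset := by
    rw [Multiset.mem_toFinset, Polynomial.mem_roots hq0]
    simp [hqdef, Polynomial.IsRoot, hx]
  rw [← hEq, hTdef, Finset.mem_image] at hx'
  obtain ⟨t, -, ht⟩ := hx'
  exact ⟨t, ht⟩

lemma fixed_tensor (k' : Type*) [Field k'] [Fintype k'] [CharP k' p]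
    (Λ : Type*) [CommRing Λ] [Algebra (ZMod p) Λ] (c : k' ⊗[ZMod p] Λ) :
    frobTensor p k' Λ c = c ↔ ∃ l : Λ, c = (1 : k') ⊗ₜ[ZMod p] l := by
  constructor
  · intro hc
    set i : ZMod p →ₗ[ZMod p] k' := Algebra.linearMap (ZMod p) k' with hidef
    set g : k' →ₗ[ZMod p] k' := frobLin p k' - LinearMap.id with hgdef
    have hexact : Function.Exact i g := by
      intro y
      constructor
      · intro hy
        have hy' : y ^ p = y := by
          have h0 : y ^ p - y = 0 := hy
          exact sub_eq_zero.mp h0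
        obtain ⟨t, ht⟩ := fixed_k' p k' y hy'
        exact ⟨t, ht⟩
      · rintro ⟨t, rfl⟩
        show (algebraMap (ZMod p) k' t) ^ p - (algebraMap (ZMod p) k' t) = 0
        rw [← map_pow, ZMod.pow_card, sub_self]
    have hT : Function.Exact (i.rTensor Λ) (g.rTensor Λ) :=
      Module.Flat.rTensor_exact Λ hexact
    have hker : (g.rTensor Λ) c = 0 := by
      rw [hgdef, LinearMap.rTensor_sub, LinearMap.sub_apply, LinearMap.rTensor_id,
        LinearMap.id_apply]
      show frobTensor p k' Λ c - c = 0
      rw [hc, sub_self]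
    obtain ⟨y, hy⟩ := (hT c).mp hker
    refine ⟨TensorProduct.lid (ZMod p) Λ y, ?_⟩
    have : y = (1 : ZMod p) ⊗ₜ[ZMod p] (TensorProduct.lid (ZMod p) Λ y) := by
      rw [← TensorProduct.lid_symm_apply, LinearEquiv.symm_apply_apply]
    rw [← hy, this, LinearMap.rTensor_tmul]
    simp [hidef]
  · rintro ⟨l, rfl⟩
    rw [frobTensor_tmul, one_pow]

open PowerSeries in
lemma phiPS_C (k' : Type*) [Field k'] [CharP k' p] (Λ : Type*) [CommRing Λ]
    [Algebra (ZMod p) Λ] (c : k' ⊗[ZMod p] Λ) :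
    phiPS p k' Λ (PowerSeries.C c) = PowerSeries.C (frobTensor p k' Λ c) := by
  have hp : 0 < p := (Fact.out : p.Prime).pos
  ext n
  rw [phiPS, coeff_mk]
  simp only [PowerSeries.coeff_C]
  by_cases hd : p ∣ n
  · rcases eq_or_ne n 0 with rfl | hn
    · simp [Nat.zero_div]
    · obtain ⟨q, rfl⟩ := hd
      have hq : q ≠ 0 := by rintro rfl; exact hn (mul_zero p)
      rw [if_pos ⟨q, rfl⟩, Nat.mul_div_cancel_left _ hp, if_neg hq, if_neg hn, map_zero]
  · have hn : n ≠ 0 := by rintro rfl; exact hd (dvd_zero p)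
    rw [if_neg hd, if_neg hn]

open PowerSeries in
lemma phiPS_X (k' : Type*) [Field k'] [CharP k' p] (Λ : Type*) [CommRing Λ]
    [Algebra (ZMod p) Λ] :
    phiPS p k' Λ (PowerSeries.X) = PowerSeries.X ^ p := by
  have hp : 0 < p := (Fact.out : p.Prime).pos
  ext n
  rw [phiPS, coeff_mk, PowerSeries.coeff_X_pow]
  by_cases hd : p ∣ n
  · obtain ⟨q, rfl⟩ := hd
    rw [if_pos ⟨q, rfl⟩, Nat.mul_div_cancel_left _ hp, PowerSeries.coeff_X]
    rcases eq_or_ne q 1 with rfl | hq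
    · rw [if_pos rfl, if_pos (mul_one p)]
      have h1 : (1 : k' ⊗[ZMod p] Λ) = (1 : k') ⊗ₜ[ZMod p] (1 : Λ) := rfl
      rw [h1, frobTensor_tmul, one_pow]
    · rw [if_neg hq, map_zero, if_neg]
      intro h
      exact hq (Nat.eq_of_mul_eq_mul_left hp (by rw [h, mul_one]))
  · rw [if_neg hd, if_neg]
    rintro rfl
    exact hd dvd_rfl


/-- Let `R := ((k' ⊗_{𝔽_p} Λ)[[u]])[1/u]` and let `φ : R → R` be the ring endomorphism acting
as the Frobenius `x ↦ x^p` on `k'`, as the identity on `Λ`, and sending `u` to `u^p` (such a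
ring endomorphism is uniquely characterized by the property that it is given on the subring
`(k' ⊗ Λ)[[u]]` by the explicit coefficientwise formula `phiPS`).  Then the fixed subring
`{ x ∈ R : φ(x) = x }` is exactly the image of `Λ` under the natural map `Λ → R`. -/
theorem fixed_points_of_phi_eq_range
    (k' : Type*) [Field k'] [Fintype k'] [CharP k' p]
    (Λ : Type*) [CommRing Λ] [Algebra (ZMod p) Λ]
    (R : Type*) [CommRing R] [Algebra (PowerSeries (k' ⊗[ZMod p] Λ)) R]
    [IsLocalization.Away (PowerSeries.X : PowerSeries (k' ⊗[ZMod p] Λ)) R]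
    (φ : R →+* R)
    (hφ : ∀ f : PowerSeries (k' ⊗[ZMod p] Λ),
      φ (algebraMap (PowerSeries (k' ⊗[ZMod p] Λ)) R f) =
        algebraMap (PowerSeries (k' ⊗[ZMod p] Λ)) R (phiPS p k' Λ f)) :
    { x : R | φ x = x } =
      Set.range (fun l : Λ =>
        algebraMap (PowerSeries (k' ⊗[ZMod p] Λ)) R
          (PowerSeries.C ((1 : k') ⊗ₜ[ZMod p] l))) := by
  classical
  have hp : 0 < p := (Fact.out : p.Prime).pos
  have hp1 : 1 ≤ p := hp
  have hp2 : 2 ≤ p := (Fact.out : p.Prime).two_le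
  have hp1' : 0 < p - 1 := by omega
  have harith : ∀ t : ℕ, t + (p - 1) * t = p * t := by
    intro t
    cases p with
    | zero => omega
    | succ q => simp [Nat.succ_sub_one]; ring
  set ψ := algebraMap (PowerSeries (k' ⊗[ZMod p] Λ)) R with hψ
  have hXnzd : (PowerSeries.X : PowerSeries (k' ⊗[ZMod p] Λ)) ∈
      nonZeroDivisors (PowerSeries (k' ⊗[ZMod p] Λ)) := by
    rw [mem_nonZeroDivisors_iff_right]
    intro g hg
    ext k
    rw [map_zero]
    have := congrArg (PowerSeries.coeff (k + 1)) hg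
    rwa [PowerSeries.coeff_succ_mul_X, map_zero] at this
  have hinj : Function.Injective ψ :=
    IsLocalization.injective R (Submonoid.powers_le.mpr hXnzd)
  have hunit : IsUnit (ψ (PowerSeries.X : PowerSeries (k' ⊗[ZMod p] Λ))) :=
    IsLocalization.Away.algebraMap_isUnit _
  ext x
  simp only [Set.mem_setOf_eq, Set.mem_range]
  constructor
  · intro hx
    obtain ⟨⟨f, s⟩, h⟩ := IsLocalization.surj
      (Submonoid.powers (PowerSeries.X : PowerSeries (k' ⊗[ZMod p] Λ))) x
    obtain ⟨n, hn⟩ := s.property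
    simp only at h
    rw [← hn, map_pow] at h
    -- h : x * (ψ X) ^ n = ψ f
    set m := (p - 1) * n with hm
    have harithn : n + m = p * n := harith n
    have h2 : x * (ψ PowerSeries.X) ^ (p * n) = ψ (phiPS p k' Λ f) := by
      have h2' := congrArg φ h
      rw [map_mul, map_pow, hx, hφ f, hφ PowerSeries.X, phiPS_X p k' Λ, map_pow,
        ← pow_mul] at h2'
      exact h2'
    have h3 : ψ (phiPS p k' Λ f) = ψ (f * PowerSeries.X ^ m) := by
      rw [map_mul, map_pow]
      calc ψ (phiPS p k' Λ f) = x * (ψ PowerSeries.X) ^ (p * n) := h2.symm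
        _ = (x * (ψ PowerSeries.X) ^ n) * (ψ PowerSeries.X) ^ m := by
            rw [mul_assoc, ← pow_add, harithn]
        _ = ψ f * (ψ PowerSeries.X) ^ m := by rw [h]
    have hE : phiPS p k' Λ f = f * PowerSeries.X ^ m := hinj h3
    set a : ℕ → k' ⊗[ZMod p] Λ := fun k => PowerSeries.coeff k f with ha
    set F := frobTensor p k' Λ with hF
    have hcoeff : ∀ t : ℕ, (if p ∣ (t + m) then F (a ((t + m) / p)) else 0) = a t := by
      intro t
      have hc := congrArg (PowerSeries.coeff (t + m)) hE
      rw [PowerSeries.coeff_mul_X_pow', if_pos (Nat.le_add_left m t),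
        Nat.add_sub_cancel] at hc
      rw [phiPS, PowerSeries.coeff_mk] at hc
      exact hc
    have key : ∀ t q : ℕ, t + m = p * q → F (a q) = a t := by
      intro t q hq
      have hc := hcoeff t
      rwa [if_pos ⟨q, hq⟩, hq, Nat.mul_div_cancel_left _ hp] at hc
    have key0 : ∀ t : ℕ, ¬ p ∣ (t + m) → a t = 0 := by
      intro t hdv
      have hc := hcoeff t
      rw [if_neg hdv] at hc
      exact hc.symm
    have han : F (a n) = a n := key n n harithn
    have hgt : ∀ t : ℕ, n < t → a t = 0 := by
      intro t
      induction t using Nat.strong_induction_on with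
      | _ t IH =>
        intro ht
        by_cases hdv : p ∣ t + m
        · obtain ⟨q, hq⟩ := hdv
          have hq1 : n < q := by
            refine Nat.lt_of_mul_lt_mul_left (a := p) ?_
            rw [← hq, ← harithn]
            exact Nat.add_lt_add_right ht m
          have hq2 : q < t := by
            refine Nat.lt_of_mul_lt_mul_left (a := p) ?_
            rw [← hq, ← harith t]
            refine Nat.add_lt_add_left ?_ t
            exact mul_lt_mul_of_pos_left ht hp1'
          rw [← key t q hq, IH q hq2 hq1, map_zero]
        · exact key0 t hdv
    have hlt : ∀ t : ℕ, t < n → a t = 0 := by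
      have haux : ∀ d t : ℕ, n - t ≤ d → t < n → a t = 0 := by
        intro d
        induction d with
        | zero => intro t hd ht; omega
        | succ d IH =>
          intro t hd ht
          by_cases hdv : p ∣ t + m
          · obtain ⟨q, hq⟩ := hdv
            have hq1 : q < n := by
              refine Nat.lt_of_mul_lt_mul_left (a := p) ?_
              rw [← hq, ← harithn]
              exact Nat.add_lt_add_right ht m
            have hq2 : t < q := by
              refine Nat.lt_of_mul_lt_mul_left (a := p) ?_
              rw [← hq, ← harith t, hm]
              refine Nat.add_lt_add_left ?_ t
              exact mul_lt_mul_of_pos_left ht hp1'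
            rw [← key t q hq, IH q (by omega) hq1, map_zero]
          · exact key0 t hdv
      exact fun t ht => haux (n - t) t le_rfl ht
    have hf : f = PowerSeries.C (a n) * PowerSeries.X ^ n := by
      ext j
      rcases lt_trichotomy j n with hj | rfl | hj
      · rw [show PowerSeries.coeff j f = a j from rfl, hlt j hj,
          PowerSeries.coeff_mul_X_pow', if_neg (by omega)]
      · rw [PowerSeries.coeff_mul_X_pow', if_pos le_rfl, Nat.sub_self,
          PowerSeries.coeff_zero_C]
      · rw [show PowerSeries.coeff j f = a j from rfl, hgt j hj,
          PowerSeries.coeff_mul_X_pow', if_pos (by omega), PowerSeries.coeff_C,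
          if_neg (by omega)]
    have hx' : x = ψ (PowerSeries.C (a n)) := by
      have h4 : x * (ψ PowerSeries.X) ^ n = ψ (PowerSeries.C (a n)) * (ψ PowerSeries.X) ^ n := by
        rw [h, hf, map_mul, map_pow]
      exact (hunit.pow n).mul_right_cancel h4
    obtain ⟨l, hl⟩ := (fixed_tensor p k' Λ (a n)).mp han
    exact ⟨l, by rw [hx', hl]⟩
  · rintro ⟨l, rfl⟩
    rw [hφ, phiPS_C]
    congr 2
    rw [frobTensor_tmul, one_pow]
end
end
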